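/- Let R be the direct limit of a directed system of commutative rings with structural maps ε_j : R_j → R, and s : Spec(R) → invlim Spec(R_i) the canonical map. For any j ∈ I and any ideal a of R_j, the preimage under the projection π_j of the vanishing set V(a) ⊆ Spec(R_j) equals the image under s of V(a·R) ⊆ Spec(R), where a·R is the extension of a to R. -/

import Mathlib

open Ring.DirectLimit

section Aux

variable {ι : Type*} [Preorder ι] [IsDirected ι (· ≤ ·)] [Nonempty ι]
    (G : ι → Type*) [∀ i, CommRing (G i)]
    (f' : ∀ i j, i ≤ j → G i →+* G j) [DirectedSystem G fun i j h => f' i j h]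
    (p : ∀ i, PrimeSpectrum (G i))
    (hp : ∀ (i k : ι) (h : i ≤ k), PrimeSpectrum.comap (f' i k h) (p k) = p i)

include hp in
lemma mem_compat {i k : ι} {y : G i} {z : G k}
    (h : of G (fun i j h => f' i j h) i y = of G (fun i j h => f' i j h) k z) :
    y ∈ (p i).asIdeal ↔ z ∈ (p k).asIdeal := by
  obtain ⟨l, hil, hkl⟩ := directed_of (· ≤ ·) i k
  have h0 : of G (fun i j h => f' i j h) l (f' i l hil y - f' k l hkl z) = 0 := by
    rw [map_sub, of_f, of_f, h, sub_self]
  obtain ⟨m, hlm, hm⟩ := of.zero_exact h0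
  rw [map_sub, sub_eq_zero] at hm
  have h1 : f' i m (hil.trans hlm) y = f' k m (hkl.trans hlm) z := by
    rw [← DirectedSystem.map_map (f := fun i j h => f' i j h) hil hlm,
      ← DirectedSystem.map_map (f := fun i j h => f' i j h) hkl hlm]
    exact hm
  have e1 := hp i m (hil.trans hlm)
  have e2 := hp k m (hkl.trans hlm)
  constructor
  · intro hy
    rw [← e2]
    rw [← e1] at hy
    simpa [PrimeSpectrum.comap, ← h1] using hy
  · intro hz
    rw [← e1]
    rw [← e2] at hz
    simpa [PrimeSpectrum.comap, h1] using hz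

/-- The candidate prime ideal of the direct limit. -/
def limIdeal : Ideal (Ring.DirectLimit G fun i j h => f' i j h) where
  carrier := {x | ∃ i y, of G (fun i j h => f' i j h) i y = x ∧ y ∈ (p i).asIdeal}
  zero_mem' := by
    obtain ⟨i⟩ := ‹Nonempty ι›
    exact ⟨i, 0, map_zero _, (p i).asIdeal.zero_mem⟩
  add_mem' := by
    rintro x₁ x₂ ⟨i₁, y₁, rfl, h₁⟩ ⟨i₂, y₂, rfl, h₂⟩
    obtain ⟨k, h1k, h2k⟩ := directed_of (· ≤ ·) i₁ i₂
    refine ⟨k, f' i₁ k h1k y₁ + f' i₂ k h2k y₂, by rw [map_add, of_f, of_f], ?_⟩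
    refine Ideal.add_mem _ ?_ ?_
    · rw [← hp i₁ k h1k] at h₁; simpa [PrimeSpectrum.comap] using h₁
    · rw [← hp i₂ k h2k] at h₂; simpa [PrimeSpectrum.comap] using h₂
  smul_mem' := by
    rintro c x ⟨i, y, rfl, h⟩
    obtain ⟨k, z, hz⟩ := exists_of c
    obtain ⟨l, hil, hkl⟩ := directed_of (· ≤ ·) i k
    refine ⟨l, f' k l hkl z * f' i l hil y, by rw [map_mul, of_f, of_f, hz]; rfl, ?_⟩
    refine Ideal.mul_mem_left _ _ ?_
    rw [← hp i l hil] at h; simpa [PrimeSpectrum.comap] using h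

lemma limIdeal_isPrime : (limIdeal G f' p hp).IsPrime := by
  constructor
  · intro h1
    obtain ⟨i, y, hy, hm⟩ := (Ideal.eq_top_iff_one _).1 h1
    have : y ∈ (p i).asIdeal ↔ (1 : G i) ∈ (p i).asIdeal :=
      mem_compat G f' p hp (by rw [hy, map_one])
    exact (p i).isPrime.ne_top (Ideal.eq_top_iff_one _ |>.2 (this.1 hm))
  · rintro x₁ x₂ ⟨i, y, hy, hm⟩
    obtain ⟨i₁, y₁, hy₁⟩ := exists_of (f := fun i j h => f' i j h) x₁
    obtain ⟨i₂, y₂, hy₂⟩ := exists_of (f := fun i j h => f' i j h) x₂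
    obtain ⟨k, h1k, h2k⟩ := directed_of (· ≤ ·) i₁ i₂
    have hx₁ : of G (fun i j h => f' i j h) k (f' i₁ k h1k y₁) = x₁ := by rw [of_f, hy₁]
    have hx₂ : of G (fun i j h => f' i j h) k (f' i₂ k h2k y₂) = x₂ := by rw [of_f, hy₂]
    have hmul : of G (fun i j h => f' i j h) k (f' i₁ k h1k y₁ * f' i₂ k h2k y₂) = x₁ * x₂ := by
      rw [map_mul, hx₁, hx₂]
    have : f' i₁ k h1k y₁ * f' i₂ k h2k y₂ ∈ (p k).asIdeal :=
      (mem_compat G f' p hp (by rw [hmul, hy])).2 hm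
    rcases (p k).isPrime.mem_or_mem this with h | h
    · exact Or.inl ⟨k, _, hx₁, h⟩
    · exact Or.inr ⟨k, _, hx₂, h⟩

lemma specComap_limIdeal (i : ι) :
    PrimeSpectrum.comap (of G (fun i j h => f' i j h) i)
      ⟨limIdeal G f' p hp, limIdeal_isPrime G f' p hp⟩ = p i := by
  ext y
  show of G (fun i j h => f' i j h) i y ∈ limIdeal G f' p hp ↔ _
  constructor
  · rintro ⟨k, z, hz, hm⟩
    exact (mem_compat G f' p hp hz.symm).2 hm
  · intro hy
    exact ⟨i, y, rfl, hy⟩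

end Aux

/-- In the inverse limit of the prime spectra of a directed system of commutative rings,
the preimage under the `j`-th projection of the vanishing set `V(a)` of an ideal
`a ⊆ R_j` equals the image under the canonical map `s` of the vanishing set of the
extension of `a` to the direct limit. -/
theorem stmt8 {ι : Type*} [Preorder ι] [IsDirected ι (· ≤ ·)] [Nonempty ι]
    (G : ι → Type*) [∀ i, CommRing (G i)]
    (f' : ∀ i j, i ≤ j → G i →+* G j) [DirectedSystem G fun i j h => f' i j h]
    (j : ι) (a : Ideal (G j)) :
    {p : ∀ i, PrimeSpectrum (G i) |
        (∀ (i k : ι) (h : i ≤ k), PrimeSpectrum.comap (f' i k h) (p k) = p i) ∧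
          p j ∈ PrimeSpectrum.zeroLocus (a : Set (G j))} =
      (fun (q : PrimeSpectrum (Ring.DirectLimit G fun i j h => f' i j h)) (i : ι) =>
          PrimeSpectrum.comap (Ring.DirectLimit.of G (fun i j h => f' i j h) i) q) ''
        PrimeSpectrum.zeroLocus
          ((Ideal.map (Ring.DirectLimit.of G (fun i j h => f' i j h) j) a :
            Ideal (Ring.DirectLimit G fun i j h => f' i j h)) :
            Set (Ring.DirectLimit G fun i j h => f' i j h)) := by
  ext p
  constructor
  · rintro ⟨hp, hpj⟩
    refine ⟨⟨limIdeal G f' p hp, limIdeal_isPrime G f' p hp⟩, ?_, ?_⟩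
    · rw [PrimeSpectrum.mem_zeroLocus]
      intro x hx
      refine Ideal.map_le_iff_le_comap.2 ?_ hx
      intro y hy
      exact ⟨j, y, rfl, hpj hy⟩
    · funext i
      exact specComap_limIdeal G f' p hp i
  · rintro ⟨q, hq, rfl⟩
    rw [PrimeSpectrum.mem_zeroLocus] at hq
    constructor
    · intro i k h
      ext y
      show f' i k h y ∈ Ideal.comap _ _ ↔ _
      simp only [Ideal.mem_comap, PrimeSpectrum.comap]
      rw [of_f]
    · rw [PrimeSpectrum.mem_zeroLocus]
      intro x hx
      show of G (fun i j h => f' i j h) j x ∈ q.asIdeal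
      exact hq (Ideal.mem_map_of_mem _ hx)
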